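/- There are no Michael spaces if and only if every K-Lusin space is productively Lindelöf. -/

import Mathlib

open Set Function TopologicalSpace MeasureTheory

universe u

/-- A space is analytic if it is a continuous image of the Baire space `ℕ → ℕ`. -/
def IsAnalyticSpace (X : Type*) [TopologicalSpace X] : Prop :=
  ∃ f : (ℕ → ℕ) → X, Continuous f ∧ Surjective f

/-- A space is Lusin if it is an injective continuous image of the Baire space. -/
def IsLusinSpace (X : Type*) [TopologicalSpace X] : Prop :=
  ∃ f : (ℕ → ℕ) → X, Continuous f ∧ Injective f ∧ Surjective f

/-- A map is perfect if it is continuous, closed, and has compact fibers. -/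
def IsPerfectMap {X Y : Type*} [TopologicalSpace X] [TopologicalSpace Y] (f : X → Y) : Prop :=
  Continuous f ∧ IsClosedMap f ∧ ∀ y : Y, IsCompact (f ⁻¹' {y})

/-- The remainder `βX \ X` of a space in its Stone–Čech compactification. -/
def StoneCechRemainder (X : Type u) [TopologicalSpace X] : Set (StoneCech X) :=
  (Set.range (stoneCechUnit : X → StoneCech X))ᶜ

/-- A space is co-analytic if its Stone–Čech remainder is analytic. -/
def CoAnalytic (X : Type u) [TopologicalSpace X] : Prop :=
  IsAnalyticSpace ↥(StoneCechRemainder X)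

/-- A space is Čech-complete if it is a `Gδ` subset of its Stone–Čech compactification. -/
def CechComplete (X : Type u) [TopologicalSpace X] : Prop :=
  IsGδ (Set.range (stoneCechUnit : X → StoneCech X))

/-- A space is K-analytic if it is a continuous image of a Lindelöf Čech-complete
(Tychonoff) space. -/
def KAnalytic (X : Type u) [TopologicalSpace X] : Prop :=
  ∃ (Y : Type u) (_ : TopologicalSpace Y) (_ : T35Space Y),
    LindelofSpace Y ∧ CechComplete Y ∧ ∃ f : Y → X, Continuous f ∧ Surjective f

/-- A space is K-Lusin if it is an injective continuous image of a Lindelöf Čech-complete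
(Tychonoff) space. -/
def KLusin (X : Type u) [TopologicalSpace X] : Prop :=
  ∃ (Y : Type u) (_ : TopologicalSpace Y) (_ : T35Space Y),
    LindelofSpace Y ∧ CechComplete Y ∧ ∃ f : Y → X, Continuous f ∧ Injective f ∧ Surjective f

/-- The Menger property. -/
def MengerSpace (X : Type*) [TopologicalSpace X] : Prop :=
  ∀ U : ℕ → Set (Set X), (∀ n, ∀ u ∈ U n, IsOpen u) → (∀ n, ⋃₀ U n = univ) →
    ∃ V : ℕ → Set (Set X), (∀ n, V n ⊆ U n ∧ (V n).Finite) ∧ ⋃₀ (⋃ n, V n) = univ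

/-- The Rothberger property. -/
def RothbergerSpace (X : Type*) [TopologicalSpace X] : Prop :=
  ∀ U : ℕ → Set (Set X), (∀ n, ∀ u ∈ U n, IsOpen u) → (∀ n, ⋃₀ U n = univ) →
    ∃ V : ℕ → Set X, (∀ n, V n ∈ U n) ∧ (⋃ n, V n) = univ

/-- A space is productively Lindelöf if its product with every Lindelöf (Tychonoff)
space is Lindelöf. -/
def ProductivelyLindelof (X : Type u) [TopologicalSpace X] : Prop :=
  ∀ (Y : Type u) (_ : TopologicalSpace Y) (_ : T35Space Y),
    LindelofSpace Y → LindelofSpace (X × Y)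

/-- A Michael space is a Lindelöf (Tychonoff) space whose product with the Baire space
is not Lindelöf. -/
def ExistsMichaelSpace : Prop :=
  ∃ (Y : Type u) (_ : TopologicalSpace Y) (_ : T35Space Y),
    LindelofSpace Y ∧ ¬ LindelofSpace (Y × (ℕ → ℕ))

/-- The Hurewicz property: every Čech-complete space in which `X` embeds contains a
σ-compact subspace containing the image of `X`. -/
def HurewiczSpace (X : Type u) [TopologicalSpace X] : Prop :=
  ∀ (Y : Type u) (_ : TopologicalSpace Y) (_ : T35Space Y), CechComplete Y →
    ∀ f : X → Y, Topology.IsEmbedding f → ∃ S : Set Y, IsSigmaCompact S ∧ range f ⊆ S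

/-- A space is projectively σ-compact if each of its continuous images in a separable
metrizable space is σ-compact. -/
def ProjectivelySigmaCompact (X : Type u) [TopologicalSpace X] : Prop :=
  ∀ (M : Type u) (_ : TopologicalSpace M) (_ : SeparableSpace M) (_ : MetrizableSpace M)
    (f : X → M), Continuous f → IsSigmaCompact (range f)

/-- A space is projectively countable if each of its continuous images in a separable
metrizable space is countable. -/
def ProjectivelyCountable (X : Type u) [TopologicalSpace X] : Prop :=
  ∀ (M : Type u) (_ : TopologicalSpace M) (_ : SeparableSpace M) (_ : MetrizableSpace M)
    (f : X → M), Continuous f → (range f).Countable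

/-- The Alster property. -/
def AlsterSpace (X : Type*) [TopologicalSpace X] : Prop :=
  ∀ G : Set (Set X), (∀ g ∈ G, IsGδ g) → ⋃₀ G = univ →
    (∀ K : Set X, IsCompact K → ∃ F : Set (Set X), F ⊆ G ∧ F.Finite ∧ K ⊆ ⋃₀ F) →
    ∃ C : Set (Set X), C ⊆ G ∧ C.Countable ∧ ⋃₀ C = univ

/-- A compact set has countable character if it has a countable neighborhood base of
open sets. -/
def HasCountableChar {X : Type*} [TopologicalSpace X] (L : Set X) : Prop :=
  ∃ B : ℕ → Set X, (∀ n, IsOpen (B n) ∧ L ⊆ B n) ∧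
    ∀ U : Set X, IsOpen U → L ⊆ U → ∃ n, B n ⊆ U

/-- A space is of countable type if every compact set is contained in a compact set
of countable character. -/
def CountableType (X : Type*) [TopologicalSpace X] : Prop :=
  ∀ K : Set X, IsCompact K → ∃ L : Set X, IsCompact L ∧ K ⊆ L ∧ HasCountableChar L

/-- A space is nowhere locally compact if no point has a compact neighborhood. -/
def NowhereLocallyCompact (X : Type*) [TopologicalSpace X] : Prop :=
  ∀ x : X, ∀ K ∈ nhds x, ¬ IsCompact (K : Set X)

/-- Weight at most `c`: there is a basis of cardinality at most `c`. -/
def WeightLE (X : Type u) [TopologicalSpace X] (c : Cardinal.{u}) : Prop :=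
  ∃ B : Set (Set X), IsTopologicalBasis B ∧ Cardinal.mk B ≤ c

/-- A space is Frolík if it is homeomorphic to a closed subspace of a countable product
of σ-compact (Tychonoff) spaces. -/
def FrolikSpace (X : Type u) [TopologicalSpace X] : Prop :=
  ∃ (Y : ℕ → Type u) (_ : ∀ n, TopologicalSpace (Y n)) (_ : ∀ n, T35Space (Y n))
    (_ : ∀ n, SigmaCompactSpace (Y n)) (C : Set (∀ n, Y n)),
    IsClosed C ∧ Nonempty (X ≃ₜ ↥C)

/-- An s-space: some compactification has a countable open source for `X`. -/
def SSpace (X : Type u) [TopologicalSpace X] : Prop :=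
  ∃ (K : Type u) (_ : TopologicalSpace K) (_ : CompactSpace K) (_ : T2Space K)
    (e : X → K), Topology.IsEmbedding e ∧ DenseRange e ∧
      ∃ S : Set (Set K), S.Countable ∧ (∀ s ∈ S, IsOpen s) ∧
        ∃ F : Set (Set (Set K)), (∀ T ∈ F, T ⊆ S ∧ T.Nonempty) ∧
          range e = ⋃ T ∈ F, ⋂₀ T

/-- A space is Lindelöf p if it admits a perfect map onto a separable metrizable space. -/
def LindelofP (X : Type u) [TopologicalSpace X] : Prop :=
  ∃ (M : Type u) (_ : TopologicalSpace M) (_ : SeparableSpace M) (_ : MetrizableSpace M)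
    (f : X → M), IsPerfectMap f ∧ Surjective f

/-- A space is proper K-analytic if it admits a perfect map onto an analytic subspace
of `ℝ^ω`. -/
def ProperKAnalytic (X : Type u) [TopologicalSpace X] : Prop :=
  ∃ A : Set (ℕ → ℝ), IsAnalyticSpace ↥A ∧ ∃ f : X → ↥A, IsPerfectMap f ∧ Surjective f

/-- A space is proper K-Lusin if it admits a perfect map onto a Lusin subspace of `ℝ^ω`. -/
def ProperKLusin (X : Type u) [TopologicalSpace X] : Prop :=
  ∃ A : Set (ℕ → ℝ), IsLusinSpace ↥A ∧ ∃ f : X → ↥A, IsPerfectMap f ∧ Surjective f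

/-- A space is absolute Borel if, viewed as a subset of its Stone–Čech compactification,
it belongs to the σ-algebra generated by the closed sets. -/
def AbsoluteBorel (X : Type u) [TopologicalSpace X] : Prop :=
  MeasurableSet[MeasurableSpace.generateFrom {s : Set (StoneCech X) | IsClosed s}]
    (Set.range (stoneCechUnit : X → StoneCech X))

section AuxProof

open Filter Topology

theorem isInducing_stoneCechUnit' {α : Type u} [TopologicalSpace α] [T35Space α] :
    Topology.IsInducing (stoneCechUnit : α → StoneCech α) := by
  rw [Topology.isInducing_iff_nhds]
  intro x
  refine le_antisymm ((continuous_stoneCechUnit.tendsto x).le_comap) ?_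
  intro U hU
  rcases mem_nhds_iff.1 hU with ⟨O, hOU, hO, hxO⟩
  obtain ⟨f, fc, fx, fO⟩ :=
    CompletelyRegularSpace.completely_regular x Oᶜ hO.isClosed_compl (by simpa using hxO)
  refine Filter.mem_comap.2 ⟨stoneCechExtend fc ⁻¹' {(1 : unitInterval)}ᶜ, ?_, ?_⟩
  · apply IsOpen.mem_nhds
    · exact (isClosed_singleton.preimage (continuous_stoneCechExtend fc)).isOpen_compl
    · have h1 : stoneCechExtend fc (stoneCechUnit x) = f x := congrFun (stoneCechExtend_extends fc) x
      simp only [Set.mem_preimage, Set.mem_compl_iff, Set.mem_singleton_iff, h1, fx]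
      intro h
      have : ((0:unitInterval):ℝ) = ((1:unitInterval):ℝ) := congrArg Subtype.val h
      norm_num at this
  · intro a ha
    simp only [Set.mem_preimage, Set.mem_compl_iff, Set.mem_singleton_iff] at ha
    have h1 : stoneCechExtend fc (stoneCechUnit a) = f a := congrFun (stoneCechExtend_extends fc) a
    rw [h1] at ha
    by_contra haU
    exact ha (fO (fun hOa : a ∈ O => haU (hOU hOa)))

theorem cechComplete_of_polish_aux {X : Type u} [TopologicalSpace X] [PolishSpace X] :
    CechComplete X := by
  letI := upgradeIsCompletelyMetrizable X
  set e : X → StoneCech X := stoneCechUnit with he_def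
  have he : Topology.IsInducing e := isInducing_stoneCechUnit'
  have hdense : DenseRange e := denseRange_stoneCechUnit
  set G : ℕ → Set (StoneCech X) := fun n =>
    ⋃₀ {V | IsOpen V ∧ ∀ a b : X, e a ∈ V → e b ∈ V → dist a b ≤ 1 / (n + 1)} with hG_def
  have hGopen : ∀ n, IsOpen (G n) := fun n => isOpen_sUnion fun V hV => hV.1
  have hsub : ∀ n, Set.range e ⊆ G n := by
    rintro n p ⟨x, rfl⟩
    have hpos : (0 : ℝ) < 1 / (2 * (n + 1)) := by positivity
    have hball : Metric.ball x (1 / (2 * (n + 1))) ∈ 𝓝 x := Metric.ball_mem_nhds x hpos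
    rw [he.nhds_eq_comap x] at hball
    obtain ⟨V', hV', hVsub⟩ := Filter.mem_comap.1 hball
    rcases mem_nhds_iff.1 hV' with ⟨V, hVV', hVopen, hxV⟩
    refine ⟨V, ⟨hVopen, ?_⟩, hxV⟩
    intro a b ha hb
    have ha' := hVsub (hVV' ha)
    have hb' := hVsub (hVV' hb)
    rw [Metric.mem_ball] at ha' hb'
    have : dist a b ≤ dist a x + dist x b := dist_triangle a x b
    rw [dist_comm x b] at this
    have h2 : dist a x + dist b x < 1 / (2 * (n + 1)) + 1 / (2 * (n + 1)) := add_lt_add ha' hb'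
    have h3 : 1 / (2 * ((n : ℝ) + 1)) + 1 / (2 * (n + 1)) = 1 / (n + 1) := by
      have hn0 : ((n : ℝ) + 1) ≠ 0 := by positivity
      field_simp
      norm_num
    rw [dist_comm b x] at h2
    linarith
  have hsup : ⋂ n, G n ⊆ Set.range e := by
    intro p hp
    set F := Filter.comap e (𝓝 p) with hF_def
    have hdi : IsDenseInducing e := ⟨he, hdense⟩
    have hne : F.NeBot := hdi.comap_nhds_neBot p
    have hc : Cauchy F := by
      rw [Metric.cauchy_iff]
      refine ⟨hne, fun ε hε => ?_⟩
      obtain ⟨n, hn⟩ := exists_nat_one_div_lt hε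
      obtain ⟨V, ⟨hVopen, hVd⟩, hpV⟩ := Set.mem_iInter.1 hp n
      exact ⟨e ⁻¹' V, Filter.preimage_mem_comap (hVopen.mem_nhds hpV),
        fun a ha b hb => lt_of_le_of_lt (hVd a b ha hb) (by exact_mod_cast hn)⟩
    obtain ⟨x, hx⟩ := CompleteSpace.complete hc
    refine ⟨x, ?_⟩
    have h1 : Filter.map e F ≤ 𝓝 (e x) :=
      le_trans (Filter.map_mono hx) (continuous_stoneCechUnit.tendsto x)
    have h2 : Filter.map e F ≤ 𝓝 p := Filter.map_comap_le
    have hnb : (𝓝 (e x) ⊓ 𝓝 p).NeBot := Filter.neBot_of_le (le_inf h1 h2)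
    exact eq_of_nhds_neBot hnb
  have heq : Set.range e = ⋂ n, G n :=
    Set.Subset.antisymm (Set.subset_iInter hsub) hsup
  rw [CechComplete, heq]
  exact IsGδ.iInter_of_isOpen fun n => hGopen n

theorem key_lemma' {K : Type u} [TopologicalSpace K] [CompactSpace K] [T2Space K]
    {Z : Type u} [TopologicalSpace Z]
    (G : ℕ → Set K) (hG : ∀ n, IsOpen (G n)) {S : Set K} (hSG : S = ⋂ n, G n)
    (hS : IsLindelof S) (hZ : LindelofSpace (Z × (ℕ → ℕ))) :
    IsLindelof ((Set.univ : Set Z) ×ˢ S) := by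
  classical
  -- Step 1: countable covers with closures inside G n
  have hcov : ∀ n : ℕ, ∃ U : ℕ → Set K,
      (∀ m, IsOpen (U m)) ∧ (∀ m, closure (U m) ⊆ G n) ∧ S ⊆ ⋃ m, U m := by
    intro n
    set ι := {V : Set K // IsOpen V ∧ closure V ⊆ G n} with hι
    have hSc : S ⊆ ⋃ i : ι, (i : Set K) := by
      intro x hx
      have hxG : x ∈ G n := by
        rw [hSG] at hx; exact Set.mem_iInter.1 hx n
      have hmem : G n ∈ 𝓝 x := (hG n).mem_nhds hxG
      obtain ⟨t, ⟨htx, htc⟩, htG⟩ := (closed_nhds_basis x).mem_iff.1 hmem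
      refine Set.mem_iUnion.2 ⟨⟨interior t, isOpen_interior, ?_⟩,
        mem_interior_iff_mem_nhds.2 htx⟩
      calc closure (interior t) ⊆ closure t := closure_mono interior_subset
        _ = t := htc.closure_eq
        _ ⊆ G n := htG
    obtain ⟨r, hrc, hrs⟩ := hS.elim_countable_subcover (fun i : ι => (i : Set K))
      (fun i => i.2.1) hSc
    have hempty : ((⟨∅, isOpen_empty, by simp⟩ : ι)) ∈ insert (⟨∅, isOpen_empty, by simp⟩ : ι) r :=
      Set.mem_insert _ _
    obtain ⟨g, hg⟩ := (hrc.insert _).exists_eq_range ⟨_, hempty⟩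
    refine ⟨fun m => (g m : Set K), fun m => (g m).2.1, fun m => (g m).2.2, ?_⟩
    intro x hx
    obtain ⟨i, hir, hxi⟩ := Set.mem_iUnion₂.1 (hrs hx)
    have hi : i ∈ insert (⟨∅, isOpen_empty, by simp⟩ : ι) r := Set.mem_insert_of_mem _ hir
    rw [hg] at hi
    obtain ⟨m, hm⟩ := hi
    exact Set.mem_iUnion.2 ⟨m, by rw [hm]; exact hxi⟩
  choose U hUopen hUcl hUcov using hcov
  -- Step 2: the compact-valued map
  set F : (ℕ → ℕ) → Set K := fun σ => ⋂ n, closure (U n (σ n)) with hF_def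
  have hFS : ∀ σ, F σ ⊆ S := by
    intro σ
    rw [hSG]
    exact Set.iInter_mono fun n => hUcl n (σ n)
  have hFcpt : ∀ σ, IsCompact (F σ) := fun σ =>
    (isClosed_iInter fun n => isClosed_closure).isCompact
  have hcover : ∀ x ∈ S, ∃ σ, x ∈ F σ := by
    intro x hx
    have h : ∀ n, ∃ m, x ∈ U n m := fun n => Set.mem_iUnion.1 (hUcov n hx)
    choose σ hσ using h
    exact ⟨σ, Set.mem_iInter.2 fun n => subset_closure (hσ n)⟩
  have husco : ∀ σ : ℕ → ℕ, ∀ W : Set K, IsOpen W → F σ ⊆ W →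
      ∃ N, 0 < N ∧ (⋂ n ∈ Finset.range N, closure (U n (σ n))) ⊆ W := by
    intro σ W hW hFW
    have hclosed : ∀ n : ℕ, IsClosed (closure (U n (σ n)) ∩ Wᶜ) := fun n =>
      isClosed_closure.inter hW.isClosed_compl
    have hcpt : IsCompact (closure (U 0 (σ 0))) := isClosed_closure.isCompact
    have hemp : (closure (U 0 (σ 0)) ∩ ⋂ n, (closure (U n (σ n)) ∩ Wᶜ)) = ∅ := by
      ext x
      simp only [Set.mem_inter_iff, Set.mem_iInter, Set.mem_compl_iff, Set.mem_empty_iff_false,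
        iff_false, not_and]
      intro _ hcontra
      have hxF : x ∈ F σ := Set.mem_iInter.2 fun n => (hcontra n).1
      exact (hcontra 0).2 (hFW hxF)
    obtain ⟨u, hu⟩ := hcpt.elim_finite_subfamily_closed _ hclosed hemp
    refine ⟨u.sup id + 1, Nat.succ_pos _, ?_⟩
    intro x hx
    by_contra hxW
    have hx' : ∀ n ∈ Finset.range (u.sup id + 1), x ∈ closure (U n (σ n)) :=
      fun n hn => Set.mem_iInter₂.1 hx n hn
    have hx0 : x ∈ closure (U 0 (σ 0)) := hx' 0 (Finset.mem_range.2 (Nat.succ_pos _))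
    have : x ∈ closure (U 0 (σ 0)) ∩ ⋂ n ∈ u, (closure (U n (σ n)) ∩ Wᶜ) := by
      refine ⟨hx0, Set.mem_iInter₂.2 fun n hn => ⟨?_, hxW⟩⟩
      exact hx' n (Finset.mem_range.2 (Nat.lt_succ_of_le (Finset.le_sup (f := id) hn)))
    rw [hu] at this
    exact this
  -- Step 3: main covering argument
  apply isLindelof_of_countable_subcover
  intro ι' 𝒰 h𝒰 hcov'
  have key : ∀ p : Z × (ℕ → ℕ), ∃ (O : Set Z) (B : Set (ℕ → ℕ)) (t : Finset ι'),
      IsOpen O ∧ IsOpen B ∧ p.1 ∈ O ∧ p.2 ∈ B ∧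
      ∀ z' ∈ O, ∀ τ ∈ B, ({z'} : Set Z) ×ˢ F τ ⊆ ⋃ i ∈ t, 𝒰 i := by
    rintro ⟨z, σ⟩
    have h1 : ({z} : Set Z) ×ˢ F σ ⊆ ⋃ i, 𝒰 i := by
      rintro ⟨a, b⟩ ⟨ha, hb⟩
      exact hcov' ⟨trivial, hFS σ hb⟩
    obtain ⟨t, ht⟩ := (isCompact_singleton.prod (hFcpt σ)).elim_finite_subcover 𝒰 h𝒰 h1
    obtain ⟨O, W, hO, hW, hzO, hFW, hOW⟩ := generalized_tube_lemma isCompact_singleton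
      (hFcpt σ) (isOpen_biUnion fun i _ => h𝒰 i) ht
    obtain ⟨N, hN0, hN⟩ := husco σ W hW hFW
    refine ⟨O, {τ | ∀ n ∈ Finset.range N, τ n = σ n}, t, hO, ?_, hzO rfl, fun n _ => rfl, ?_⟩
    · have heq : {τ : ℕ → ℕ | ∀ n ∈ Finset.range N, τ n = σ n}
          = ⋂ n ∈ Finset.range N, (fun τ : ℕ → ℕ => τ n) ⁻¹' {σ n} := by
        ext τ; simp
      rw [heq]
      exact isOpen_biInter_finset fun n _ =>
        (continuous_apply n).isOpen_preimage _ (isOpen_discrete _)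
    · rintro z' hz' τ hτ ⟨a, b⟩ ⟨ha, hb⟩
      have hab : b ∈ W := by
        apply hN
        refine Set.mem_iInter₂.2 fun n hn => ?_
        have := Set.mem_iInter.1 hb n
        rwa [hτ n hn] at this
      have hzz : a ∈ O := by
        rcases ha with rfl
        exact hz'
      exact hOW ⟨hzz, hab⟩
  choose O B t hO hB hpO hpB hloc using key
  obtain ⟨c, hcc, hcov2⟩ := hZ.elim_nhds_subcover (fun p => O p ×ˢ B p)
    (fun p => ((hO p).prod (hB p)).mem_nhds ⟨hpO p, hpB p⟩)
  refine ⟨⋃ p ∈ c, (t p : Set ι'), hcc.biUnion fun p _ => (t p).countable_toSet, ?_⟩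
  rintro ⟨z, x⟩ ⟨-, hxS⟩
  obtain ⟨σ, hσ⟩ := hcover x hxS
  have hmem : (z, σ) ∈ ⋃ p ∈ c, O p ×ˢ B p := by
    rw [hcov2]; trivial
  obtain ⟨p, hpc, hzp, hσp⟩ : ∃ p ∈ c, z ∈ O p ∧ σ ∈ B p := by
    rcases Set.mem_iUnion₂.1 hmem with ⟨p, hpc, hzσ⟩
    exact ⟨p, hpc, hzσ.1, hzσ.2⟩
  have hin : (z, x) ∈ ⋃ i ∈ t p, 𝒰 i := hloc p z hzp σ hσp ⟨rfl, hσ⟩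
  obtain ⟨i, hit, hxi⟩ := Set.mem_iUnion₂.1 hin
  exact Set.mem_iUnion₂.2 ⟨i, Set.mem_iUnion₂.2 ⟨p, hpc, hit⟩, hxi⟩

theorem lindelof_prod' {Y Z : Type u} [TopologicalSpace Y] [T35Space Y] [TopologicalSpace Z]
    (hY : LindelofSpace Y) (hcc : IsGδ (Set.range (stoneCechUnit : Y → StoneCech Y)))
    (hZ : LindelofSpace (Z × (ℕ → ℕ))) : LindelofSpace (Z × Y) := by
  obtain ⟨T, hTopen, hTc, hTeq⟩ := hcc
  obtain ⟨g, hg⟩ := (hTc.insert Set.univ).exists_eq_range (Set.insert_nonempty _ _)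
  have hGopen : ∀ n, IsOpen (g n) := by
    intro n
    have h : g n ∈ insert Set.univ T := by rw [hg]; exact Set.mem_range_self n
    rcases Set.mem_insert_iff.1 h with h | h
    · rw [h]; exact isOpen_univ
    · exact hTopen _ h
  have hSeq : Set.range (stoneCechUnit : Y → StoneCech Y) = ⋂ n, g n := by
    rw [← Set.sInter_range, ← hg, Set.sInter_insert, hTeq, Set.univ_inter]
  have hSL : IsLindelof (Set.range (stoneCechUnit : Y → StoneCech Y)) := by
    haveI := hY
    exact isLindelof_range continuous_stoneCechUnit
  have hmain : IsLindelof ((Set.univ : Set Z) ×ˢ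
      Set.range (stoneCechUnit : Y → StoneCech Y)) :=
    key_lemma' g hGopen hSeq hSL hZ
  have hind : Topology.IsInducing (Prod.map (id : Z → Z) (stoneCechUnit : Y → StoneCech Y)) :=
    Topology.IsInducing.id.prodMap isInducing_stoneCechUnit'
  rw [← isLindelof_univ_iff]
  have himg : Prod.map (id : Z → Z) (stoneCechUnit : Y → StoneCech Y) '' Set.univ
      = (Set.univ : Set Z) ×ˢ Set.range (stoneCechUnit : Y → StoneCech Y) := by
    ext ⟨a, b⟩
    simp [Prod.map, Prod.ext_iff, eq_comm]
  rw [← himg] at hmain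
  exact hind.isLindelof_iff.2 hmain

end AuxProof

/-- There are no Michael spaces iff every K-Lusin space is productively
Lindelöf. -/

theorem no_michael_iff_kLusin_prodLindelof :
    (¬ ExistsMichaelSpace.{u}) ↔
      ∀ (X : Type u) (_ : TopologicalSpace X) (_ : T35Space X),
        KLusin X → ProductivelyLindelof X := by
  constructor
  · intro hm X tX t35X hX Z tZ t35Z hZL
    obtain ⟨Y, tY, t35Y, hYL, hYcc, f, hfc, hfi, hfs⟩ := hX
    have hZN : LindelofSpace (Z × (ℕ → ℕ)) := by
      by_contra h
      exact hm ⟨Z, tZ, t35Z, hZL, h⟩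
    haveI h1 : LindelofSpace (Z × Y) := lindelof_prod' hYL hYcc hZN
    rw [← isLindelof_univ_iff]
    have himg : (fun q : Z × Y => (f q.2, q.1)) '' Set.univ = (Set.univ : Set (X × Z)) := by
      ext ⟨x, z⟩
      simp only [Set.image_univ, Set.mem_range, Set.mem_univ, iff_true, Prod.ext_iff]
      obtain ⟨y, hy⟩ := hfs x
      exact ⟨(z, y), hy, rfl⟩
    rw [← himg]
    exact (isLindelof_univ (X := Z × Y)).image ((hfc.comp continuous_snd).prodMk continuous_fst)
  · intro h hm
    obtain ⟨Y, tY, t35Y, hYL, hYnL⟩ := hm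
    haveI hPX : PolishSpace (ULift.{u} (ℕ → ℕ)) := Equiv.ulift.polishSpace_induced
    haveI hT35 : T35Space (ULift.{u} (ℕ → ℕ)) := by
      letI := upgradeIsCompletelyMetrizable (ULift.{u} (ℕ → ℕ)); infer_instance
    haveI hLin : LindelofSpace (ULift.{u} (ℕ → ℕ)) := by
      letI := upgradeIsCompletelyMetrizable (ULift.{u} (ℕ → ℕ)); infer_instance
    have hKL : KLusin (ULift.{u} (ℕ → ℕ)) :=
      ⟨ULift.{u} (ℕ → ℕ), inferInstance, hT35, hLin, cechComplete_of_polish_aux, id,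
        continuous_id, Function.injective_id, Function.surjective_id⟩
    haveI hPL := h _ _ hT35 hKL Y tY t35Y hYL
    apply hYnL
    rw [← isLindelof_univ_iff]
    have himg : (fun q : ULift.{u} (ℕ → ℕ) × Y => (q.2, q.1.down)) '' Set.univ
        = (Set.univ : Set (Y × (ℕ → ℕ))) := by
      ext ⟨y, s⟩
      simp only [Set.image_univ, Set.mem_range, Set.mem_univ, iff_true, Prod.ext_iff]
      exact ⟨(⟨s⟩, y), rfl, rfl⟩
    rw [← himg]
    exact isLindelof_univ.image
      (continuous_snd.prodMk (continuous_uliftDown.comp continuous_fst))
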